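/- Let A be a symmetric positive-definite n×n matrix, F : ℝⁿ → ℝⁿ with continuous components (F(x))_i = φ_i(x_i) where each φ_i is nondecreasing, f ∈ ℝⁿ, and H(x) = Ax + F(x) − f. Then for any x⁰ ∈ ℝⁿ and α ∈ (0,1), the level set D₀ = { x ∈ ℝⁿ : ‖H(x)‖² ≤ (1+α)² ‖H(x⁰)‖² } is bounded. -/

import Mathlib

lemma coercive (n : ℕ) (A : Matrix (Fin n) (Fin n) ℝ) (hApd : A.PosDef) :
    ∃ c > (0:ℝ), ∀ v : Fin n → ℝ, c * (dotProduct v v) ≤ dotProduct v (A.mulVec v) := by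
  rcases Nat.eq_zero_or_pos n with hn | hn
  · refine ⟨1, one_pos, fun v => ?_⟩
    subst hn
    simp [dotProduct]
  · haveI : Nonempty (Fin n) := ⟨⟨0, hn⟩⟩
    haveI : Nontrivial (EuclideanSpace ℝ (Fin n)) := inferInstance
    set g : EuclideanSpace ℝ (Fin n) → ℝ := fun v => dotProduct v (A.mulVec (v : Fin n → ℝ)) with hg
    have hgc : Continuous g := by
      have : g = fun v : EuclideanSpace ℝ (Fin n) =>
          ∑ i, (v : Fin n → ℝ) i * ∑ j, A i j * (v : Fin n → ℝ) j := by
        funext v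
        simp [hg, dotProduct, Matrix.mulVec, dotProduct]
      rw [this]
      fun_prop
    obtain ⟨v0, hv0, hmin'⟩ := (isCompact_sphere (0 : EuclideanSpace ℝ (Fin n)) 1).exists_isMinOn
      (NormedSpace.sphere_nonempty.mpr zero_le_one) hgc.continuousOn
    have hmin : ∀ x ∈ Metric.sphere (0 : EuclideanSpace ℝ (Fin n)) 1, g v0 ≤ g x := hmin'
    have hv0ne : (v0 : Fin n → ℝ) ≠ 0 := by
      intro h
      have : v0 = 0 := WithLp.ofLp_injective 2 h
      rw [this] at hv0
      simp at hv0
    have hc : 0 < g v0 := by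
      have := hApd.dotProduct_mulVec_pos hv0ne
      simpa [hg] using this
    refine ⟨g v0, hc, fun v => ?_⟩
    by_cases hv : v = 0
    · simp [hv]
    · set w : EuclideanSpace ℝ (Fin n) := WithLp.toLp 2 v
      have hwne : w ≠ 0 := fun h => hv (congrArg WithLp.ofLp h)
      have hnw : 0 < ‖w‖ := norm_pos_iff.mpr hwne
      have hsph : ‖w‖⁻¹ • w ∈ Metric.sphere (0 : EuclideanSpace ℝ (Fin n)) 1 := by
        simp [norm_smul, abs_of_pos (inv_pos.mpr hnw), inv_mul_cancel₀ hnw.ne']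
      have h1 := hmin _ hsph
      have hcoe : ((‖w‖⁻¹ • w : EuclideanSpace ℝ (Fin n)) : Fin n → ℝ) = ‖w‖⁻¹ • (w : Fin n → ℝ) := rfl
      have hscale : g (‖w‖⁻¹ • w) = ‖w‖⁻¹ * ‖w‖⁻¹ * g w := by
        show dotProduct _ (A.mulVec _) = _
        rw [hcoe, Matrix.mulVec_smul, smul_dotProduct, dotProduct_smul,
          smul_eq_mul, smul_eq_mul]
        show _ = _ * _ * dotProduct w (A.mulVec w)
        ring
      have hdot : dotProduct v v = ‖w‖ * ‖w‖ := by
        have h := real_inner_self_eq_norm_mul_norm w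
        rw [← h]
        simp [PiLp.inner_apply, dotProduct, RCLike.inner_apply]
        rw [EuclideanSpace.norm_eq, Real.sq_sqrt (Finset.sum_nonneg fun i _ => sq_nonneg _)]
        simp [w, sq]
      rw [hdot]
      rw [hscale] at h1
      calc g v0 * (‖w‖ * ‖w‖) ≤ (‖w‖⁻¹ * ‖w‖⁻¹ * g w) * (‖w‖ * ‖w‖) :=
            mul_le_mul_of_nonneg_right h1 (by positivity)
        _ = g w := by field_simp
        _ = dotProduct v (A.mulVec v) := rfl

lemma dot_self_nonneg {n : ℕ} (v : Fin n → ℝ) : 0 ≤ dotProduct v v :=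
  Finset.sum_nonneg fun i _ => mul_self_nonneg (v i)

lemma cs {n : ℕ} (v w : Fin n → ℝ) :
    dotProduct v w ≤ Real.sqrt (dotProduct v v) * Real.sqrt (dotProduct w w) := by
  have h : (∑ i, v i * w i) ^ 2 ≤ (∑ i, v i ^ 2) * ∑ i, w i ^ 2 :=
    Finset.sum_mul_sq_le_sq_mul_sq Finset.univ v w
  have h2 : dotProduct v w ≤ Real.sqrt ((∑ i, v i ^ 2) * ∑ i, w i ^ 2) := by
    calc dotProduct v w ≤ |∑ i, v i * w i| := le_abs_self _
      _ = Real.sqrt ((∑ i, v i * w i) ^ 2) := (Real.sqrt_sq_eq_abs _).symm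
      _ ≤ _ := Real.sqrt_le_sqrt h
  rw [Real.sqrt_mul (Finset.sum_nonneg fun i _ => sq_nonneg _)] at h2
  simpa [dotProduct, sq] using h2

/-- The level set `D₀ = {x : ‖H x‖² ≤ (1+α)² ‖H x⁰‖²}` of the merit function is
bounded, where `H x = A x + F x - f`, `A` symmetric positive definite and `F`
has continuous nondecreasing diagonal components. (`‖v‖² = v ⬝ᵥ v`.) -/
theorem stmt_2 (n : ℕ) (A : Matrix (Fin n) (Fin n) ℝ) (hApd : A.PosDef)
    (φ : Fin n → ℝ → ℝ) (hφmono : ∀ i, Monotone (φ i))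
    (hφcont : ∀ i, Continuous (φ i))
    (f : Fin n → ℝ)
    (F H : (Fin n → ℝ) → (Fin n → ℝ))
    (hF : ∀ x i, F x i = φ i (x i))
    (hH : ∀ x, H x = A.mulVec x + F x - f)
    (x0 : Fin n → ℝ) (α : ℝ) (hα : α ∈ Set.Ioo (0:ℝ) 1) :
    Bornology.IsBounded
      {x : Fin n → ℝ |
        dotProduct (H x) (H x) ≤ (1 + α)^2 * dotProduct (H x0) (H x0)} := by
  obtain ⟨c, hc, hcoer⟩ := coercive n A hApd
  obtain ⟨hα0, hα1⟩ := hα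
  set M : ℝ := (2 + α) * Real.sqrt (dotProduct (H x0) (H x0)) with hM
  have hM0 : 0 ≤ M := mul_nonneg (by linarith) (Real.sqrt_nonneg _)
  have hR0 : 0 ≤ M / c := div_nonneg hM0 hc.le
  apply Bornology.IsBounded.subset (Metric.isBounded_closedBall (x := x0) (r := M / c))
  intro x hx
  simp only [Set.mem_setOf_eq] at hx
  set u : Fin n → ℝ := x - x0 with hu
  set s : ℝ := Real.sqrt (dotProduct u u) with hs
  have hs0 : 0 ≤ s := Real.sqrt_nonneg _
  have hss : dotProduct u u = s ^ 2 := (Real.sq_sqrt (dot_self_nonneg u)).symm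
  -- H x - H x0 = A u + (F x - F x0)
  have hHdiff : H x - H x0 = A.mulVec u + (F x - F x0) := by
    rw [hH, hH, hu, Matrix.mulVec_sub]
    abel
  -- monotone part nonneg
  have hmono : 0 ≤ dotProduct (F x - F x0) u := by
    apply Finset.sum_nonneg
    intro i _
    simp only [Pi.sub_apply, hF, hu]
    rcases le_total (x0 i) (x i) with h | h
    · exact mul_nonneg (by simpa using sub_nonneg.mpr (hφmono i h)) (by simpa using sub_nonneg.mpr h)
    · have h1 : φ i (x i) - φ i (x0 i) ≤ 0 := sub_nonpos.mpr (hφmono i h)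
      have h2 : x i - x0 i ≤ 0 := sub_nonpos.mpr h
      nlinarith
  have key : c * (s ^ 2) ≤ M * s := by
    have h1 : c * dotProduct u u ≤ dotProduct u (A.mulVec u) := hcoer u
    have h2 : dotProduct u (A.mulVec u) ≤ dotProduct (H x - H x0) u := by
      rw [hHdiff, add_dotProduct]
      have : dotProduct (A.mulVec u) u = dotProduct u (A.mulVec u) :=
        dotProduct_comm _ _
      linarith
    have h3 : dotProduct (H x - H x0) u
        = dotProduct (H x) u + dotProduct (-(H x0)) u := by
      rw [sub_dotProduct, neg_dotProduct]; ring
    have h4 : dotProduct (H x) u ≤ Real.sqrt (dotProduct (H x) (H x)) * s := cs _ _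
    have h5 : dotProduct (-(H x0)) u
        ≤ Real.sqrt (dotProduct (H x0) (H x0)) * s := by
      have := cs (-(H x0)) u
      simpa [neg_dotProduct, dotProduct_neg] using this
    have h6 : Real.sqrt (dotProduct (H x) (H x))
        ≤ (1 + α) * Real.sqrt (dotProduct (H x0) (H x0)) := by
      have := Real.sqrt_le_sqrt hx
      rwa [Real.sqrt_mul (sq_nonneg _), Real.sqrt_sq (by linarith)] at this
    have h7 : Real.sqrt (dotProduct (H x) (H x)) * s
        ≤ (1 + α) * Real.sqrt (dotProduct (H x0) (H x0)) * s :=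
      mul_le_mul_of_nonneg_right h6 hs0
    calc c * s ^ 2 = c * dotProduct u u := by rw [hss]
      _ ≤ dotProduct (H x - H x0) u := le_trans h1 h2
      _ = dotProduct (H x) u + dotProduct (-(H x0)) u := h3
      _ ≤ (1 + α) * Real.sqrt (dotProduct (H x0) (H x0)) * s
          + Real.sqrt (dotProduct (H x0) (H x0)) * s := by linarith
      _ = M * s := by rw [hM]; ring
  have hsMc : s ≤ M / c := by
    rcases eq_or_lt_of_le hs0 with h | h
    · rw [← h]; exact hR0
    · rw [le_div_iff₀ hc]
      nlinarith
  rw [Metric.mem_closedBall]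
  rw [dist_pi_le_iff hR0]
  intro i
  have hui : (u i) ^ 2 ≤ s ^ 2 := by
    rw [← hss]
    have : dotProduct u u = ∑ j, u j * u j := rfl
    rw [this]
    have h := Finset.single_le_sum (f := fun j => u j * u j)
      (fun j _ => mul_self_nonneg (u j)) (Finset.mem_univ i)
    simpa [sq] using h
  have habs : |u i| ≤ s := by
    have := Real.sqrt_le_sqrt hui
    rwa [Real.sqrt_sq_eq_abs, Real.sqrt_sq hs0] at this
  have : dist (x i) (x0 i) = |u i| := by
    rw [Real.dist_eq, hu]; simp
  rw [this]
  exact le_trans habs hsMc
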